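/- Spectral decimation, extension direction (paper's Theorem, Section 5, first half): Let m ≥ 1, let λ' be a real number with λ' ∉ {2, n+2, 2n}, and set λ = (n+2)λ' − λ'² (so that λ'² − (n+2)λ' + λ = 0). Suppose u : ℝ^{n−1} → ℝ is an eigenfunction of Δ_{m−1} with eigenvalue λ. Define u' : ℝ^{n−1} → ℝ to agree with u at every point of V_{m−1} and to satisfy, for every word a ∈ (Fin n)^{m−1} and all r ≠ s with r, s < n, u'(x_{r,s}) = [ (4 − λ')(u(x_{r,r}) + u(x_{s,s})) + 2·∑_{j ≠ r,s} u(x_{j,j}) ] / ( (2 − λ')((n+2) − λ') ). Then u' is an eigenfunction of Δ_m with eigenvalue λ'. -/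

import Mathlib

open Finset

noncomputable section

/-- Ambient Euclidean space `ℝ^{n-1}`. -/
abbrev Amb (n : ℕ) := EuclideanSpace ℝ (Fin (n - 1))

/-- The contraction `f_i(x) = (x + x_i)/2`. -/
def fmap {n : ℕ} (pts : Fin n → Amb n) (i : Fin n) (x : Amb n) : Amb n :=
  (2 : ℝ)⁻¹ • (x + pts i)

/-- Composition of contractions along a list (first entry applied last... actually first). -/
def fList {n : ℕ} (pts : Fin n → Amb n) : List (Fin n) → Amb n → Amb n
  | [] => id
  | i :: t => fmap pts i ∘ fList pts t

/-- The `m`-contraction `f_w = f_{w_0} ∘ ⋯ ∘ f_{w_{m-1}}`. -/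
def fWord {n m : ℕ} (pts : Fin n → Amb n) (w : Fin m → Fin n) : Amb n → Amb n :=
  fList pts (List.ofFn w)

/-- The vertex set `V_m = ⋃_w f_w(V_0)`, where `V_0 = {x_0, …, x_{n-1}}`. -/
def V {n : ℕ} (pts : Fin n → Amb n) (m : ℕ) : Set (Amb n) :=
  ⋃ w : Fin m → Fin n, fWord pts w '' Set.range pts

/-- Adjacency in the graph `Γ_m`. -/
def Adj {n : ℕ} (pts : Fin n → Amb n) (m : ℕ) (x y : Amb n) : Prop :=
  x ≠ y ∧ ∃ w : Fin m → Fin n,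
    x ∈ fWord pts w '' Set.range pts ∧ y ∈ fWord pts w '' Set.range pts

/-- The graph Laplacian `Δ_m u (x) = ∑_{y ~ x} (u(x) - u(y))`. -/
def lap {n : ℕ} (pts : Fin n → Amb n) (m : ℕ) (u : Amb n → ℝ) (x : Amb n) : ℝ :=
  ∑ᶠ y ∈ {y | Adj pts m x y}, (u x - u y)

/-- `u` is an eigenfunction of `Δ_m` with eigenvalue `lam`:
`Δ_m u (x) = lam * u x` for all `x ∈ V_m \ V_0`. -/
def IsEigen {n : ℕ} (pts : Fin n → Amb n) (m : ℕ) (u : Amb n → ℝ) (lam : ℝ) : Prop :=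
  ∀ x ∈ V pts m \ V pts 0, lap pts m u x = lam * u x

/-- The point `x_{r,s} = f_a((x_r + x_s)/2)` for a word `a` of length `m-1`. -/
def xpt {n m : ℕ} (pts : Fin n → Amb n) (a : Fin m → Fin n) (r s : Fin n) : Amb n :=
  fWord pts a ((2 : ℝ)⁻¹ • (pts r + pts s))

/-- The graph energy `E_m(u) = ∑_{x ~ y} (u(x) - u(y))²`, summed over unordered
adjacent pairs (each ordered pair counted once, then halved). -/
def energy {n : ℕ} (pts : Fin n → Amb n) (m : ℕ) (u : Amb n → ℝ) : ℝ :=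
  (2 : ℝ)⁻¹ * ∑ᶠ p ∈ {p : Amb n × Amb n | Adj pts m p.1 p.2}, (u p.1 - u p.2) ^ 2


namespace SDE

variable {n : ℕ} (pts : Fin n → Amb n)

/-- midpoint of two basis points -/
def mid (r s : Fin n) : Amb n := (2 : ℝ)⁻¹ • (pts r + pts s)

lemma fmap_eq_midpoint (i : Fin n) (x : Amb n) : fmap pts i x = midpoint ℝ x (pts i) := by
  rw [midpoint_eq_smul_add, invOf_eq_inv]; rfl

lemma mid_eq_midpoint (r s : Fin n) : mid pts r s = midpoint ℝ (pts r) (pts s) := by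
  rw [midpoint_eq_smul_add, invOf_eq_inv]; rfl

lemma mid_comm (r s : Fin n) : mid pts r s = mid pts s r := by
  rw [mid_eq_midpoint, mid_eq_midpoint, midpoint_comm]

lemma mid_self (r : Fin n) : mid pts r r = pts r := by
  rw [mid_eq_midpoint, midpoint_self]

lemma fmap_pts (t j : Fin n) : fmap pts t (pts j) = mid pts t j := by
  rw [fmap_eq_midpoint, mid_eq_midpoint, midpoint_comm]

/-- integer digit-count vector of a word -/
def wvec : List (Fin n) → Fin n → ℕ
  | [], _ => 0
  | t :: rest, i => (if i = t then 2 ^ rest.length else 0) + wvec rest i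

lemma wvec_lt (w : List (Fin n)) (i : Fin n) : wvec w i < 2 ^ w.length := by
  induction w with
  | nil => simp [wvec]
  | cons t rest ih =>
    simp only [wvec, List.length_cons, pow_succ]
    split <;> omega

lemma wvec_concat (w : List (Fin n)) (t i : Fin n) :
    wvec (w ++ [t]) i = 2 * wvec w i + (if i = t then 1 else 0) := by
  induction w with
  | nil => simp [wvec]
  | cons s rest ih =>
    simp only [List.cons_append, wvec, ih]
    show (if i = s then 2 ^ (rest ++ [t]).length else 0) + (2 * wvec rest i + if i = t then 1 else 0) =
      2 * ((if i = s then 2 ^ rest.length else 0) + wvec rest i) + if i = t then 1 else 0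
    rw [List.length_append]
    simp only [List.length_cons, List.length_nil, pow_succ, pow_add, pow_one]
    split <;> omega

lemma wvec_inj : ∀ (w v : List (Fin n)), w.length = v.length →
    (∀ i, wvec w i = wvec v i) → w = v := by
  intro w
  induction w with
  | nil => intro v hl _; cases v with
    | nil => rfl
    | cons _ _ => simp at hl
  | cons t rest ih =>
    intro v hl h
    cases v with
    | nil => simp at hl
    | cons t' rest' =>
      simp only [List.length_cons, Nat.succ_inj] at hl
      have ht : t = t' := by
        by_contra hne
        have h1 := h t
        have h2 := h t'
        simp only [wvec, if_true] at h1
        rw [if_neg hne, hl] at h1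
        have hc := wvec_lt rest' t
        omega
      subst ht
      have : rest = rest' := by
        apply ih rest' hl
        intro i
        have := h i
        simp only [wvec, hl] at this
        omega
      rw [this]

lemma fList_concat (w : List (Fin n)) (t : Fin n) (x : Amb n) :
    fList pts (w ++ [t]) x = fList pts w (fmap pts t x) := by
  induction w with
  | nil => rfl
  | cons s rest ih =>
    simp only [List.cons_append, fList, Function.comp_apply]
    exact congrArg _ ih

lemma fmap_injective (i : Fin n) : Function.Injective (fmap pts i) := by
  intro x y h
  simpa [fmap, smul_add, smul_right_injective _ (by norm_num : (2:ℝ)⁻¹ ≠ 0)] using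
    (add_left_injective (pts i) (smul_right_injective (Amb n) (by norm_num : (2:ℝ)⁻¹ ≠ 0) h))

lemma fList_injective (w : List (Fin n)) : Function.Injective (fList pts w) := by
  induction w with
  | nil => exact fun x y h => h
  | cons t rest ih => exact fun x y h => ih (fmap_injective pts t h)

variable (b : AffineBasis (Fin n) ℝ (Amb n))

lemma coord_fList (hb : ∀ i, b i = pts i) (i : Fin n) (w : List (Fin n)) (x : Amb n) :
    b.coord i (fList pts w x) = (b.coord i x + wvec w i) / 2 ^ w.length := by
  induction w with
  | nil => simp [fList, wvec]
  | cons t rest ih =>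
    simp only [fList, Function.comp_apply, fmap_eq_midpoint, AffineMap.map_midpoint, wvec,
      List.length_cons]
    rw [ih]
    have hc : b.coord i (pts t) = if i = t then 1 else 0 := by
      rw [← hb t]; exact b.coord_apply i t
    rw [midpoint_eq_smul_add, invOf_eq_inv, hc, smul_eq_mul]
    push_cast
    rw [pow_succ]
    have h2 : ((2:ℝ) ^ rest.length) ≠ 0 := by positivity
    split
    · field_simp
      ring
    · field_simp
      ring

lemma coord_pts (hb : ∀ i, b i = pts i) (i j : Fin n) :
    b.coord i (pts j) = if i = j then 1 else 0 := by
  rw [← hb j]; exact b.coord_apply i j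

lemma coord_mid (hb : ∀ i, b i = pts i) (i r s : Fin n) :
    b.coord i (mid pts r s) =
      ((if i = r then (1:ℝ) else 0) + (if i = s then 1 else 0)) / 2 := by
  rw [mid_eq_midpoint, AffineMap.map_midpoint, midpoint_eq_smul_add, invOf_eq_inv,
    coord_pts pts b hb, coord_pts pts b hb, smul_eq_mul]
  ring

lemma coord_fList_pts (hb : ∀ i, b i = pts i) (i : Fin n) (w : List (Fin n)) (j : Fin n) :
    b.coord i (fList pts w (pts j)) =
      ((wvec w i + if i = j then 1 else 0 : ℕ) : ℝ) / 2 ^ w.length := by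
  rw [coord_fList pts b hb, coord_pts pts b hb]
  congr 1
  push_cast [apply_ite (Nat.cast : ℕ → ℝ)]
  ring

lemma coord_fList_mid (hb : ∀ i, b i = pts i) (i : Fin n) (a : List (Fin n)) (r s : Fin n) :
    b.coord i (fList pts a (mid pts r s)) =
      ((2 * wvec a i + (if i = r then 1 else 0) + (if i = s then 1 else 0) : ℕ) : ℝ)
        / 2 ^ (a.length + 1) := by
  rw [coord_fList pts b hb, coord_mid pts b hb]
  have h2 : ((2:ℝ) ^ a.length) ≠ 0 := by positivity
  push_cast [apply_ite (Nat.cast : ℕ → ℝ)]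
  rw [pow_succ]
  field_simp
  ring

/-- E2 : vertex representations at equal level have equal digit vectors. -/
lemma eqn_vertex_vertex (hb : ∀ i, b i = pts i) {w v : List (Fin n)} {j k : Fin n}
    (hl : w.length = v.length) (h : fList pts w (pts j) = fList pts v (pts k)) (i : Fin n) :
    wvec w i + (if i = j then 1 else 0) = wvec v i + (if i = k then 1 else 0) := by
  have hc := congrArg (b.coord i) h
  rw [coord_fList_pts pts b hb, coord_fList_pts pts b hb, hl] at hc
  have h2 : ((2:ℝ) ^ v.length) ≠ 0 := by positivity
  rw [div_eq_div_iff h2 h2] at hc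
  have := mul_right_cancel₀ h2 hc
  exact_mod_cast this

/-- E1 : vertex representation of a midpoint. -/
lemma eqn_vertex_mid (hb : ∀ i, b i = pts i) {w a : List (Fin n)} {j r s : Fin n}
    (hl : w.length = a.length + 1) (h : fList pts w (pts j) = fList pts a (mid pts r s))
    (i : Fin n) :
    wvec w i + (if i = j then 1 else 0) =
      2 * wvec a i + (if i = r then 1 else 0) + (if i = s then 1 else 0) := by
  have hc := congrArg (b.coord i) h
  rw [coord_fList_pts pts b hb, coord_fList_mid pts b hb, hl] at hc
  have h2 : ((2:ℝ) ^ (a.length + 1)) ≠ 0 := by positivity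
  rw [div_eq_div_iff h2 h2] at hc
  have := mul_right_cancel₀ h2 hc
  exact_mod_cast this

lemma fList_pts_concat_self (v : List (Fin n)) (k : Fin n) :
    fList pts (v ++ [k]) (pts k) = fList pts v (pts k) := by
  rw [fList_concat, fmap_pts, mid_self]

/-- E3 : a vertex of level L is never a proper midpoint of a level-L cell. -/
lemma vertex_ne_mid (hb : ∀ i, b i = pts i) {v a : List (Fin n)} {k r s : Fin n}
    (hl : v.length = a.length) (hrs : r ≠ s)
    (h : fList pts v (pts k) = fList pts a (mid pts r s)) : False := by
  have h' : fList pts (v ++ [k]) (pts k) = fList pts a (mid pts r s) := by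
    rw [fList_pts_concat_self]; exact h
  have hl' : (v ++ [k]).length = a.length + 1 := by simp [hl]
  have h1 := eqn_vertex_mid pts b hb hl' h' r
  rw [wvec_concat, if_pos rfl, if_neg hrs] at h1
  by_cases hrk : r = k
  · rw [if_pos hrk] at h1; omega
  · rw [if_neg hrk] at h1; omega

/-- Lemma A : classification of the vertex representations of a midpoint. -/
lemma midreps (hb : ∀ i, b i = pts i) {a : List (Fin n)} {r s : Fin n} (hrs : r ≠ s)
    {w : List (Fin n)} {j : Fin n} (hl : w.length = a.length + 1)
    (h : fList pts w (pts j) = fList pts a (mid pts r s)) :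
    (w = a ++ [r] ∧ j = s) ∨ (w = a ++ [s] ∧ j = r) := by
  obtain (rfl | ⟨w', t, rfl⟩) := w.eq_nil_or_concat
  · simp at hl
  simp only [List.concat_eq_append] at hl h ⊢
  have hl' : w'.length = a.length := by
    rw [List.length_append, List.length_cons, List.length_nil] at hl; omega
  have key : ∀ i, 2 * wvec w' i + (if i = t then 1 else 0) + (if i = j then 1 else 0)
      = 2 * wvec a i + (if i = r then 1 else 0) + (if i = s then 1 else 0) := by
    intro i
    have h0 := eqn_vertex_mid pts b hb hl h i
    rw [wvec_concat] at h0
    omega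
  have htj : t ≠ j := by
    rintro rfl
    have h1 := key r
    rw [if_pos rfl, if_neg hrs] at h1
    by_cases hrt : r = t
    · rw [if_pos hrt] at h1; omega
    · rw [if_neg hrt] at h1; omega
  have htmem : t = r ∨ t = s := by
    by_contra hcon
    push_neg at hcon
    have h1 := key t
    rw [if_pos rfl, if_neg htj, if_neg hcon.1, if_neg hcon.2] at h1
    omega
  rcases htmem with rfl | rfl
  · -- last letter is r  (r has been replaced by t)
    have hj : j = s := by
      have h1 := key s
      rw [if_neg (Ne.symm hrs), if_pos rfl] at h1
      by_cases hsj : s = j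
      · exact hsj.symm
      · rw [if_neg hsj] at h1; omega
    subst hj
    left
    refine ⟨?_, rfl⟩
    have hwa : w' = a := by
      apply wvec_inj w' a hl'
      intro i
      have h1 := key i
      omega
    rw [hwa]
  · -- last letter is s (s replaced by t)
    have hj : j = r := by
      have h1 := key r
      rw [if_neg hrs, if_pos rfl] at h1
      by_cases hrj : r = j
      · exact hrj.symm
      · rw [if_neg hrj] at h1; omega
    subst hj
    right
    refine ⟨?_, rfl⟩
    have hwa : w' = a := by
      apply wvec_inj w' a hl'
      intro i
      have h1 := key i
      omega
    rw [hwa]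

lemma ofFn_of_length {m : ℕ} (l : List (Fin n)) (h : l.length = m) :
    ∃ w : Fin m → Fin n, List.ofFn w = l := by
  subst h
  exact ⟨l.get, List.ofFn_get l⟩

lemma mem_V_iff {m : ℕ} {x : Amb n} :
    x ∈ V pts m ↔ ∃ w : List (Fin n), w.length = m ∧ ∃ j, fList pts w (pts j) = x := by
  constructor
  · intro hx
    rw [V, Set.mem_iUnion] at hx
    obtain ⟨w, hw⟩ := hx
    obtain ⟨z, ⟨j, rfl⟩, hz⟩ := hw
    exact ⟨List.ofFn w, by simp, j, hz⟩
  · rintro ⟨w, hl, j, hx⟩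
    obtain ⟨wf, rfl⟩ := ofFn_of_length w hl
    rw [V, Set.mem_iUnion]
    exact ⟨wf, ⟨pts j, ⟨j, rfl⟩, hx⟩⟩

lemma V_zero : V pts 0 = Set.range pts := by
  ext x
  rw [mem_V_iff]
  constructor
  · rintro ⟨w, hl, j, hx⟩
    have hw : w = [] := List.eq_nil_of_length_eq_zero hl
    subst hw
    exact ⟨j, hx⟩
  · rintro ⟨j, rfl⟩
    exact ⟨[], rfl, j, rfl⟩

/-- Master lemma: a point of `V_L \ V_0` has exactly two vertex representations
at level `L`. -/
lemma reps (hb : ∀ i, b i = pts i) :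
    ∀ (L : ℕ) (x : Amb n) (w : List (Fin n)) (j : Fin n),
    w.length = L → fList pts w (pts j) = x → x ∉ Set.range pts →
    ∃ (c d : List (Fin n)) (p q : Fin n), c.length = L ∧ d.length = L ∧
      (c ≠ d ∨ p ≠ q) ∧ fList pts c (pts p) = x ∧ fList pts d (pts q) = x ∧
      ∀ v k, v.length = L → fList pts v (pts k) = x → (v = c ∧ k = p) ∨ (v = d ∧ k = q) := by
  intro L
  induction L with
  | zero =>
    intro x w j hl hx hx0
    exfalso
    apply hx0
    have hw : w = [] := List.eq_nil_of_length_eq_zero hl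
    subst hw
    exact ⟨j, hx⟩
  | succ L ih =>
    intro x w j hl hx hx0
    obtain (rfl | ⟨w', t, rfl⟩) := w.eq_nil_or_concat
    · simp at hl
    simp only [List.concat_eq_append] at hl hx
    have hl' : w'.length = L := by
      rw [List.length_append, List.length_cons, List.length_nil] at hl; omega
    by_cases htj : t = j
    · -- x already lies in V_L
      subst htj
      rw [fList_pts_concat_self] at hx
      obtain ⟨c, d, p, q, hc, hd, hne, hcp, hdq, huniq⟩ := ih x w' t hl' hx hx0
      refine ⟨c ++ [p], d ++ [q], p, q, by simp [hc], by simp [hd], ?_, ?_, ?_, ?_⟩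
      · rcases eq_or_ne p q with rfl | hpq
        · left
          intro he
          rcases hne with h | h
          · exact h (by simpa using he)
          · exact h rfl
        · right; exact hpq
      · rw [fList_pts_concat_self]; exact hcp
      · rw [fList_pts_concat_self]; exact hdq
      · intro v k hvl hvx
        obtain (rfl | ⟨v', t', rfl⟩) := v.eq_nil_or_concat
        · simp at hvl
        simp only [List.concat_eq_append] at hvl hvx ⊢
        have hvl' : v'.length = L := by
          rw [List.length_append, List.length_cons, List.length_nil] at hvl; omega
        by_cases ht' : t' = k
        · subst ht'
          rw [fList_pts_concat_self] at hvx
          rcases huniq v' t' hvl' hvx with ⟨rfl, rfl⟩ | ⟨rfl, rfl⟩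
          · left; exact ⟨rfl, rfl⟩
          · right; exact ⟨rfl, rfl⟩
        · exfalso
          have hmid : fList pts v' (mid pts t' k) = x := by
            rw [← hvx, fList_concat, fmap_pts]
          exact vertex_ne_mid pts b hb (hc.trans hvl'.symm) ht' (hcp.trans hmid.symm)
    · -- x is a genuine midpoint at this level
      have hx' : fList pts w' (mid pts t j) = x := by
        rw [← hx, fList_concat, fmap_pts]
      refine ⟨w' ++ [t], w' ++ [j], j, t, by simp [hl'], by simp [hl'],
        Or.inr (Ne.symm htj), hx, ?_, ?_⟩
      · rw [fList_concat, fmap_pts, mid_comm]; exact hx'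
      · intro v k hvl hvx
        have hvl2 : v.length = w'.length + 1 := by rw [hvl, hl']
        exact midreps pts b hb htj hvl2 (hvx.trans hx'.symm)

open scoped Classical

def cellF (w : List (Fin n)) : Finset (Amb n) :=
  Finset.univ.image (fun j => fList pts w (pts j))

lemma mem_cellF {w : List (Fin n)} {y : Amb n} :
    y ∈ cellF pts w ↔ ∃ j, fList pts w (pts j) = y := by
  simp [cellF]

lemma adj_set_eq {m : ℕ} {x : Amb n} {c d : List (Fin n)} {p q : Fin n}
    (hc : c.length = m) (hd : d.length = m)
    (hcp : fList pts c (pts p) = x) (hdq : fList pts d (pts q) = x)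
    (huniq : ∀ v k, v.length = m → fList pts v (pts k) = x →
      (v = c ∧ k = p) ∨ (v = d ∧ k = q)) :
    {y | Adj pts m x y} = ↑((cellF pts c ∪ cellF pts d).erase x) := by
  ext y
  simp only [Set.mem_setOf_eq, Finset.coe_erase, Set.mem_diff, Finset.mem_coe,
    Finset.mem_union, mem_cellF, Set.mem_singleton_iff]
  constructor
  · rintro ⟨hne, wf, ⟨z1, ⟨j1, rfl⟩, hz1⟩, ⟨z2, ⟨j2, rfl⟩, hz2⟩⟩
    have hlen : (List.ofFn wf).length = m := by simp
    refine ⟨?_, Ne.symm hne⟩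
    rcases huniq (List.ofFn wf) j1 hlen hz1 with ⟨he, _⟩ | ⟨he, _⟩
    · exact Or.inl ⟨j2, by rw [← he]; exact hz2⟩
    · exact Or.inr ⟨j2, by rw [← he]; exact hz2⟩
  · rintro ⟨hy, hne⟩
    refine ⟨Ne.symm hne, ?_⟩
    rcases hy with ⟨j, hj⟩ | ⟨j, hj⟩
    · obtain ⟨wf, hwf⟩ := ofFn_of_length c hc
      exact ⟨wf, ⟨pts p, ⟨p, rfl⟩, by rw [fWord, hwf]; exact hcp⟩,
             ⟨pts j, ⟨j, rfl⟩, by rw [fWord, hwf]; exact hj⟩⟩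
    · obtain ⟨wf, hwf⟩ := ofFn_of_length d hd
      exact ⟨wf, ⟨pts q, ⟨q, rfl⟩, by rw [fWord, hwf]; exact hdq⟩,
             ⟨pts j, ⟨j, rfl⟩, by rw [fWord, hwf]; exact hj⟩⟩

lemma cells_eq_of_two (hb : ∀ i, b i = pts i) {w v : List (Fin n)}
    (hl : w.length = v.length) {j k j' k' : Fin n}
    (h1 : fList pts w (pts j) = fList pts v (pts j'))
    (h2 : fList pts w (pts k) = fList pts v (pts k')) (hjk : j ≠ k) : w = v := by
  have e1 := fun i => eqn_vertex_vertex pts b hb hl h1 i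
  have hjj' : j = j' := by
    by_contra hne
    have a1 := e1 j
    have a2 := eqn_vertex_vertex pts b hb hl h2 j
    rw [if_pos rfl, if_neg hne] at a1
    rw [if_neg hjk] at a2
    by_cases hjk' : j = k'
    · rw [if_pos hjk'] at a2; omega
    · rw [if_neg hjk'] at a2; omega
  subst hjj'
  apply wvec_inj _ _ hl
  intro i
  have := e1 i
  omega

lemma cellF_inter (hb : ∀ i, b i = pts i) {w v : List (Fin n)}
    (hl : w.length = v.length) (hne : w ≠ v) {x : Amb n}
    (hxw : x ∈ cellF pts w) (hxv : x ∈ cellF pts v) :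
    cellF pts w ∩ cellF pts v = {x} := by
  obtain ⟨k, hk⟩ := (mem_cellF pts).mp hxw
  obtain ⟨k', hk'⟩ := (mem_cellF pts).mp hxv
  ext y
  simp only [Finset.mem_inter, mem_cellF, Finset.mem_singleton]
  constructor
  · rintro ⟨⟨j, hj⟩, ⟨j', hj'⟩⟩
    by_contra hyx
    have hjk : j ≠ k := by
      intro he
      exact hyx (by rw [← hj, he, hk])
    exact hne (cells_eq_of_two pts b hb hl (hj.trans hj'.symm) (hk.trans hk'.symm) hjk)
  · rintro rfl
    exact ⟨⟨k, hk⟩, ⟨k', hk'⟩⟩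

lemma lap_eval (hb : ∀ i, b i = pts i) (hinj : Function.Injective pts)
    {m : ℕ} {x : Amb n} {c d : List (Fin n)} {p q : Fin n}
    (hc : c.length = m) (hd : d.length = m) (hcd : c ≠ d)
    (hcp : fList pts c (pts p) = x) (hdq : fList pts d (pts q) = x)
    (huniq : ∀ v k, v.length = m → fList pts v (pts k) = x →
      (v = c ∧ k = p) ∨ (v = d ∧ k = q)) (g : Amb n → ℝ) :
    lap pts m g x = (∑ j, (g x - g (fList pts c (pts j))))
      + (∑ j, (g x - g (fList pts d (pts j)))) := by
  rw [lap, adj_set_eq pts hc hd hcp hdq huniq, finsum_mem_coe_finset]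
  rw [Finset.sum_erase (f := fun y => g x - g y) (a := x)
    (cellF pts c ∪ cellF pts d) (sub_self (g x))]
  have hABx : cellF pts c ∩ cellF pts d = {x} :=
    cellF_inter pts b hb (hc.trans hd.symm) hcd
      ((mem_cellF pts).mpr ⟨p, hcp⟩) ((mem_cellF pts).mpr ⟨q, hdq⟩)
  have hsum : ((∑ y ∈ (cellF pts c ∪ cellF pts d), (g x - g y))
        + ∑ y ∈ (cellF pts c ∩ cellF pts d), (g x - g y))
      = (∑ y ∈ cellF pts c, (g x - g y)) + ∑ y ∈ cellF pts d, (g x - g y) :=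
    Finset.sum_union_inter
  rw [hABx, Finset.sum_singleton, sub_self, add_zero] at hsum
  rw [hsum]
  congr 1
  · rw [cellF, Finset.sum_image (fun a _ a' _ h => hinj (fList_injective pts c h))]
  · rw [cellF, Finset.sum_image (fun a _ a' _ h => hinj (fList_injective pts d h))]

lemma reps_succ (hb : ∀ i, b i = pts i) {L : ℕ} {x : Amb n} {c d : List (Fin n)} {p q : Fin n}
    (hc : c.length = L) (hd : d.length = L)
    (hcp : fList pts c (pts p) = x) (hdq : fList pts d (pts q) = x)
    (huniq : ∀ v k, v.length = L → fList pts v (pts k) = x →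
      (v = c ∧ k = p) ∨ (v = d ∧ k = q)) :
    ∀ v k, v.length = L + 1 → fList pts v (pts k) = x →
      (v = c ++ [p] ∧ k = p) ∨ (v = d ++ [q] ∧ k = q) := by
  intro v k hvl hvx
  obtain (rfl | ⟨v', t', rfl⟩) := v.eq_nil_or_concat
  · simp at hvl
  simp only [List.concat_eq_append] at hvl hvx ⊢
  have hvl' : v'.length = L := by
    rw [List.length_append, List.length_cons, List.length_nil] at hvl; omega
  by_cases ht' : t' = k
  · subst ht'
    rw [fList_pts_concat_self] at hvx
    rcases huniq v' t' hvl' hvx with ⟨rfl, rfl⟩ | ⟨rfl, rfl⟩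
    · left; exact ⟨rfl, rfl⟩
    · right; exact ⟨rfl, rfl⟩
  · exfalso
    have hmid : fList pts v' (mid pts t' k) = x := by
      rw [← hvx, fList_concat, fmap_pts]
    exact vertex_ne_mid pts b hb (hc.trans hvl'.symm) ht' (hcp.trans hmid.symm)

lemma sum_filter_ne_ne {g : Fin n → ℝ} {p j : Fin n} (hpj : p ≠ j) :
    ∑ k ∈ Finset.univ.filter (fun k => k ≠ p ∧ k ≠ j), g k = (∑ k, g k) - g p - g j := by
  classical
  have hset : Finset.univ.filter (fun k => k ≠ p ∧ k ≠ j)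
      = (Finset.univ.erase p).erase j := by
    ext k
    simp only [Finset.mem_filter, Finset.mem_erase, Finset.mem_univ, and_true, true_and]
    tauto
  rw [hset, Finset.sum_erase_eq_sub (Finset.mem_erase.mpr ⟨Ne.symm hpj, Finset.mem_univ j⟩),
    Finset.sum_erase_eq_sub (Finset.mem_univ p)]

lemma sum_erase_eq {g : Fin n → ℝ} (p : Fin n) :
    ∑ k ∈ Finset.univ.erase p, g k = (∑ k, g k) - g p :=
  Finset.sum_erase_eq_sub (Finset.mem_univ p)

section Main

variable {m : ℕ} {lam' lam : ℝ} {u u' : Amb n → ℝ}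

/-- The sum of `u'` over the cell `a ++ [p]` at level `m`. -/
lemma cell_sum (hb : ∀ i, b i = pts i) (hn : 2 ≤ n) (hm : 1 ≤ m)
    (hD2 : (2 : ℝ) - lam' ≠ 0) (hDn : ((n:ℝ) + 2) - lam' ≠ 0)
    (hagree : ∀ x ∈ V pts (m-1), u' x = u x)
    (hext : ∀ (a : Fin (m - 1) → Fin n) (r s : Fin n), r ≠ s →
      u' (xpt pts a r s) =
        ((4 - lam') * (u (xpt pts a r r) + u (xpt pts a s s)) +
            2 * ∑ j ∈ Finset.univ.filter (fun j => j ≠ r ∧ j ≠ s), u (xpt pts a j j)) /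
          ((2 - lam') * (((n : ℝ) + 2) - lam')))
    (a : List (Fin n)) (ha : a.length = m - 1) (p : Fin n) :
    ∑ j, u' (fList pts (a ++ [p]) (pts j))
      = u (fList pts a (pts p))
        + ((n:ℝ) - 1) * (((4 - lam') * u (fList pts a (pts p))
              + 2 * (∑ k, u (fList pts a (pts k))) - 2 * u (fList pts a (pts p)))
            / ((2 - lam') * (((n:ℝ) + 2) - lam')))
        + ((2 - lam') / ((2 - lam') * (((n:ℝ) + 2) - lam')))
            * ((∑ k, u (fList pts a (pts k))) - u (fList pts a (pts p))) := by
  classical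
  obtain ⟨af, haf⟩ := ofFn_of_length a ha
  have hxpt : ∀ r s : Fin n, xpt pts af r s = fList pts a (mid pts r s) := by
    intro r s
    rw [xpt, fWord, haf]
    rfl
  have hdiag : ∀ k, xpt pts af k k = fList pts a (pts k) := by
    intro k
    rw [hxpt, mid_self]
  have hterm : ∀ j, fList pts (a ++ [p]) (pts j) = fList pts a (mid pts p j) := by
    intro j
    rw [fList_concat, fmap_pts]
  have hmem : ∀ k : Fin n, fList pts a (pts k) ∈ V pts (m-1) :=
    fun k => (mem_V_iff pts).mpr ⟨a, ha, k, rfl⟩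
  set T := ∑ k, u (fList pts a (pts k)) with hT
  set up := u (fList pts a (pts p)) with hup
  set D := (2 - lam') * (((n:ℝ) + 2) - lam') with hDdef
  have hD : D ≠ 0 := mul_ne_zero hD2 hDn
  have hval : ∀ j ∈ Finset.univ.erase p,
      u' (fList pts (a ++ [p]) (pts j))
        = ((4 - lam') * up + 2 * T - 2 * up) / D + ((2 - lam') / D) * u (fList pts a (pts j)) := by
    intro j hj
    have hpj : p ≠ j := Ne.symm (Finset.mem_erase.mp hj).1
    have h1 : fList pts (a ++ [p]) (pts j) = xpt pts af p j := by
      rw [hterm, hxpt]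
    rw [h1, hext af p j hpj]
    have h2 : ∀ k ∈ Finset.univ.filter (fun k => k ≠ p ∧ k ≠ j),
        u (xpt pts af k k) = u (fList pts a (pts k)) := fun k _ => by rw [hdiag]
    rw [Finset.sum_congr rfl h2, sum_filter_ne_ne hpj, hdiag, hdiag]
    field_simp
    ring
  have hsplit : ∑ j, u' (fList pts (a ++ [p]) (pts j))
      = (∑ j ∈ Finset.univ.erase p, u' (fList pts (a ++ [p]) (pts j)))
        + u' (fList pts (a ++ [p]) (pts p)) :=
    (Finset.sum_erase_add _ _ (Finset.mem_univ p)).symm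
  rw [hsplit, Finset.sum_congr rfl hval]
  have hpp : u' (fList pts (a ++ [p]) (pts p)) = up := by
    rw [hterm, mid_self]
    exact hagree _ (hmem p)
  rw [hpp, Finset.sum_add_distrib, Finset.sum_const, Finset.card_erase_of_mem (Finset.mem_univ p),
    Finset.card_univ, Fintype.card_fin, ← Finset.mul_sum, sum_erase_eq, ← hT]
  have hcast : ((n - 1 : ℕ) : ℝ) = (n:ℝ) - 1 := by
    have : (1:ℕ) ≤ n := by omega
    push_cast [this]
    ring
  rw [nsmul_eq_mul, hcast]
  ring

lemma case_mid (hb : ∀ i, b i = pts i) (hinj : Function.Injective pts)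
    (hn : 2 ≤ n) (hm : 1 ≤ m)
    (hD2 : (2 : ℝ) - lam' ≠ 0) (hDn : ((n:ℝ) + 2) - lam' ≠ 0)
    (hagree : ∀ x ∈ V pts (m-1), u' x = u x)
    (hext : ∀ (a : Fin (m - 1) → Fin n) (r s : Fin n), r ≠ s →
      u' (xpt pts a r s) =
        ((4 - lam') * (u (xpt pts a r r) + u (xpt pts a s s)) +
            2 * ∑ j ∈ Finset.univ.filter (fun j => j ≠ r ∧ j ≠ s), u (xpt pts a j j)) /
          ((2 - lam') * (((n : ℝ) + 2) - lam')))
    (a : List (Fin n)) (ha : a.length = m - 1) {r s : Fin n} (hrs : r ≠ s) :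
    lap pts m u' (fList pts a (mid pts r s))
      = lam' * u' (fList pts a (mid pts r s)) := by
  classical
  set x := fList pts a (mid pts r s) with hx
  have hc : (a ++ [r]).length = m := by
    rw [List.length_append, List.length_cons, List.length_nil, ha]; omega
  have hd : (a ++ [s]).length = m := by
    rw [List.length_append, List.length_cons, List.length_nil, ha]; omega
  have hcp : fList pts (a ++ [r]) (pts s) = x := by rw [fList_concat, fmap_pts]
  have hdq : fList pts (a ++ [s]) (pts r) = x := by rw [fList_concat, fmap_pts, mid_comm]
  have hcd : a ++ [r] ≠ a ++ [s] := by
    intro he; exact hrs (by simpa using he)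
  have huniq : ∀ v k, v.length = m → fList pts v (pts k) = x →
      (v = a ++ [r] ∧ k = s) ∨ (v = a ++ [s] ∧ k = r) := by
    intro v k hvl hvx
    exact midreps pts b hb hrs (by rw [hvl, ha]; omega) hvx
  rw [lap_eval pts b hb hinj hc hd hcd hcp hdq huniq u']
  have hsum1 : ∑ j, (u' x - u' (fList pts (a ++ [r]) (pts j)))
      = (n:ℝ) * u' x - ∑ j, u' (fList pts (a ++ [r]) (pts j)) := by
    rw [Finset.sum_sub_distrib, Finset.sum_const, Finset.card_univ, Fintype.card_fin,
      nsmul_eq_mul]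
  have hsum2 : ∑ j, (u' x - u' (fList pts (a ++ [s]) (pts j)))
      = (n:ℝ) * u' x - ∑ j, u' (fList pts (a ++ [s]) (pts j)) := by
    rw [Finset.sum_sub_distrib, Finset.sum_const, Finset.card_univ, Fintype.card_fin,
      nsmul_eq_mul]
  rw [hsum1, hsum2, cell_sum pts b hb hn hm hD2 hDn hagree hext a ha r,
    cell_sum pts b hb hn hm hD2 hDn hagree hext a ha s]
  obtain ⟨af, haf⟩ := ofFn_of_length a ha
  have hxpt : ∀ r' s' : Fin n, xpt pts af r' s' = fList pts a (mid pts r' s') := by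
    intro r' s'
    rw [xpt, fWord, haf]
    rfl
  have hdiag : ∀ k, xpt pts af k k = fList pts a (pts k) := by
    intro k
    rw [hxpt, mid_self]
  have hux : u' x = ((4 - lam') * (u (fList pts a (pts r)) + u (fList pts a (pts s)))
      + 2 * ((∑ k, u (fList pts a (pts k))) - u (fList pts a (pts r))
               - u (fList pts a (pts s))))
      / ((2 - lam') * (((n:ℝ) + 2) - lam')) := by
    rw [hx, ← hxpt, hext af r s hrs]
    rw [Finset.sum_congr rfl (fun k _ => by rw [hdiag] :
        ∀ k ∈ Finset.univ.filter (fun k => k ≠ r ∧ k ≠ s),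
          u (xpt pts af k k) = u (fList pts a (pts k))),
      sum_filter_ne_ne hrs, hdiag, hdiag]
  rw [hux]
  have hD : ((2:ℝ) - lam') * (((n:ℝ) + 2) - lam') ≠ 0 := mul_ne_zero hD2 hDn
  field_simp
  ring

lemma case_vertex (hb : ∀ i, b i = pts i) (hinj : Function.Injective pts)
    (hn : 2 ≤ n) (hm : 1 ≤ m)
    (hD2 : (2 : ℝ) - lam' ≠ 0) (hDn : ((n:ℝ) + 2) - lam' ≠ 0)
    (hlam : lam = ((n : ℝ) + 2) * lam' - lam' ^ 2)
    (hu : IsEigen pts (m - 1) u lam)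
    (hagree : ∀ x ∈ V pts (m-1), u' x = u x)
    (hext : ∀ (a : Fin (m - 1) → Fin n) (r s : Fin n), r ≠ s →
      u' (xpt pts a r s) =
        ((4 - lam') * (u (xpt pts a r r) + u (xpt pts a s s)) +
            2 * ∑ j ∈ Finset.univ.filter (fun j => j ≠ r ∧ j ≠ s), u (xpt pts a j j)) /
          ((2 - lam') * (((n : ℝ) + 2) - lam')))
    {x : Amb n} (hxM : x ∈ V pts (m-1)) (hx0 : x ∉ Set.range pts) :
    lap pts m u' x = lam' * u' x := by
  classical
  obtain ⟨wx, hwxl, jx, hwx⟩ := (mem_V_iff pts).mp hxM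
  obtain ⟨c, d, p, q, hc, hd, hne, hcp, hdq, huniq⟩ :=
    reps pts b hb (m-1) x wx jx hwxl hwx hx0
  have hcd : c ≠ d := by
    intro he
    subst he
    rcases hne with h | h
    · exact h rfl
    · exact h (hinj (fList_injective pts c (hcp.trans hdq.symm)))
  have heig : lap pts (m-1) u x = lam * u x := hu x ⟨hxM, by rw [V_zero]; exact hx0⟩
  rw [lap_eval pts b hb hinj hc hd hcd hcp hdq huniq u] at heig
  have huniq' := reps_succ pts b hb hc hd hcp hdq huniq
  have hmm : m - 1 + 1 = m := by omega
  rw [hmm] at huniq'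
  have hc' : (c ++ [p]).length = m := by
    rw [List.length_append, List.length_cons, List.length_nil, hc]; omega
  have hd' : (d ++ [q]).length = m := by
    rw [List.length_append, List.length_cons, List.length_nil, hd]; omega
  have hcd' : c ++ [p] ≠ d ++ [q] := by
    intro he
    exact hcd (List.append_inj' he rfl).1
  have hcp' : fList pts (c ++ [p]) (pts p) = x := by
    rw [fList_pts_concat_self]; exact hcp
  have hdq' : fList pts (d ++ [q]) (pts q) = x := by
    rw [fList_pts_concat_self]; exact hdq
  rw [lap_eval pts b hb hinj hc' hd' hcd' hcp' hdq' huniq' u']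
  have hsum1 : ∑ j, (u' x - u' (fList pts (c ++ [p]) (pts j)))
      = (n:ℝ) * u' x - ∑ j, u' (fList pts (c ++ [p]) (pts j)) := by
    rw [Finset.sum_sub_distrib, Finset.sum_const, Finset.card_univ, Fintype.card_fin,
      nsmul_eq_mul]
  have hsum2 : ∑ j, (u' x - u' (fList pts (d ++ [q]) (pts j)))
      = (n:ℝ) * u' x - ∑ j, u' (fList pts (d ++ [q]) (pts j)) := by
    rw [Finset.sum_sub_distrib, Finset.sum_const, Finset.card_univ, Fintype.card_fin,
      nsmul_eq_mul]
  have hsc : ∑ j, (u x - u (fList pts c (pts j)))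
      = (n:ℝ) * u x - ∑ j, u (fList pts c (pts j)) := by
    rw [Finset.sum_sub_distrib, Finset.sum_const, Finset.card_univ, Fintype.card_fin,
      nsmul_eq_mul]
  have hsd : ∑ j, (u x - u (fList pts d (pts j)))
      = (n:ℝ) * u x - ∑ j, u (fList pts d (pts j)) := by
    rw [Finset.sum_sub_distrib, Finset.sum_const, Finset.card_univ, Fintype.card_fin,
      nsmul_eq_mul]
  rw [hsc, hsd] at heig
  rw [hsum1, hsum2, cell_sum pts b hb hn hm hD2 hDn hagree hext c hc p,
    cell_sum pts b hb hn hm hD2 hDn hagree hext d hd q]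
  rw [hcp, hdq]
  rw [hagree x hxM]
  set Tc := ∑ k, u (fList pts c (pts k)) with hTc
  set Td := ∑ k, u (fList pts d (pts k)) with hTd0
  have hTd : Td = 2 * (n:ℝ) * u x - lam * u x - Tc := by linarith
  rw [hTd, hlam]
  have hD : ((2:ℝ) - lam') * (((n:ℝ) + 2) - lam') ≠ 0 := mul_ne_zero hD2 hDn
  field_simp
  ring

end Main

end SDE


/-- Spectral decimation, extension direction. -/
theorem spectral_decimation_extension
    (n : ℕ) (hn : 2 ≤ n) (pts : Fin n → Amb n) (hpts : AffineIndependent ℝ pts)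
    (m : ℕ) (hm : 1 ≤ m) (lam' lam : ℝ)
    (h2 : lam' ≠ 2) (hn2 : lam' ≠ (n : ℝ) + 2) (h2n : lam' ≠ 2 * n)
    (hlam : lam = ((n : ℝ) + 2) * lam' - lam' ^ 2)
    (u u' : Amb n → ℝ)
    (hu : IsEigen pts (m - 1) u lam)
    (hagree : ∀ x ∈ V pts (m - 1), u' x = u x)
    (hext : ∀ (a : Fin (m - 1) → Fin n) (r s : Fin n), r ≠ s →
      u' (xpt pts a r s) =
        ((4 - lam') * (u (xpt pts a r r) + u (xpt pts a s s)) +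
            2 * ∑ j ∈ Finset.univ.filter (fun j => j ≠ r ∧ j ≠ s), u (xpt pts a j j)) /
          ((2 - lam') * (((n : ℝ) + 2) - lam'))) :
    IsEigen pts m u' lam' := by
  classical
  have hinj : Function.Injective pts := hpts.injective
  have hcard : Fintype.card (Fin n) = Module.finrank ℝ (Amb n) + 1 := by
    rw [Fintype.card_fin, finrank_euclideanSpace, Fintype.card_fin]
    omega
  have htot : affineSpan ℝ (Set.range pts) = ⊤ :=
    hpts.affineSpan_eq_top_iff_card_eq_finrank_add_one.mpr hcard
  let b : AffineBasis (Fin n) ℝ (Amb n) := ⟨pts, hpts, htot⟩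
  have hb : ∀ i, b i = pts i := fun i => rfl
  have hD2 : (2:ℝ) - lam' ≠ 0 := sub_ne_zero.mpr (Ne.symm h2)
  have hDn : ((n:ℝ) + 2) - lam' ≠ 0 := sub_ne_zero.mpr (Ne.symm hn2)
  intro x hx
  obtain ⟨hxm, hx0'⟩ := hx
  have hx0 : x ∉ Set.range pts := by rw [← SDE.V_zero pts]; exact hx0'
  obtain ⟨w, hwl, j, hwx⟩ := (SDE.mem_V_iff pts).mp hxm
  obtain (rfl | ⟨w', t, rfl⟩) := w.eq_nil_or_concat
  · exfalso
    rw [List.length_nil] at hwl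
    omega
  simp only [List.concat_eq_append] at hwl hwx
  have hwl' : w'.length = m - 1 := by
    rw [List.length_append, List.length_cons, List.length_nil] at hwl; omega
  by_cases htj : t = j
  · subst htj
    rw [SDE.fList_pts_concat_self] at hwx
    have hxM : x ∈ V pts (m-1) := (SDE.mem_V_iff pts).mpr ⟨w', hwl', t, hwx⟩
    exact SDE.case_vertex pts b hb hinj hn hm hD2 hDn hlam hu hagree hext hxM hx0
  · have hxm' : fList pts w' (SDE.mid pts t j) = x := by
      rw [← hwx, SDE.fList_concat, SDE.fmap_pts]
    rw [← hxm']
    exact SDE.case_mid pts b hb hinj hn hm hD2 hDn hagree hext w' hwl' htj
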